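/- Let p be an odd prime, m, n ≥ 1, and λ a unit of ZMod (p^m) with λ^(p^n) = 1, and let G = G(λ,m,n). Then for every natural number r, the set of p^r-th powers {g^(p^r) : g ∈ G} equals the set of elements (a,x) of G such that p^r divides a in ZMod (p^m) and p^r divides x in ZMod (p^n). -/

import Mathlib

open Finset

def IsBeauvilleStructure {G : Type*} [Group G] (x y z a b c : G) : Prop :=
  x * y * z = 1 ∧ a * b * c = 1 ∧
  Subgroup.closure {x, y, z} = ⊤ ∧ Subgroup.closure {a, b, c} = ⊤ ∧
  ∀ u ∈ ({x, y, z} : Set G), ∀ v ∈ ({a, b, c} : Set G), ∀ g : G, ∀ i j : ℤ,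
    u ^ i = g * v ^ j * g⁻¹ → u ^ i = 1

/-- The homomorphism `ZMod (p^n) → (ZMod (p^m))ˣ` sending (the class of) `x` to `λ^x`,
well-defined since `λ^(p^n) = 1`. -/
def zmodUnitHom (p m n : ℕ) (lam : (ZMod (p^m))ˣ) (h : lam ^ (p^n) = 1) :
    Multiplicative (ZMod (p^n)) →* (ZMod (p^m))ˣ :=
  AddMonoidHom.toMultiplicativeLeft
    (ZMod.lift (p^n) ⟨(zmultiplesHom (Additive (ZMod (p^m))ˣ)) (Additive.ofMul lam), by
      show ((p^n : ℕ) : ℤ) • Additive.ofMul lam = 0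
      rw [← ofMul_zpow, zpow_natCast, h]
      rfl⟩)

/-- Additive automorphisms of `R` as multiplicative automorphisms of `Multiplicative R`. -/
def addAutToMulAut (R : Type*) [AddZeroClass R] : Multiplicative (AddAut R) →* MulAut (Multiplicative R) where
  toFun e := AddEquiv.toMultiplicative (Multiplicative.toAdd e)
  map_one' := rfl
  map_mul' _ _ := rfl

/-- The action of `ZMod (p^n)` on `ZMod (p^m)` where `x` acts by multiplication by `λ^x`. -/
def beauvilleAut (p m n : ℕ) (lam : (ZMod (p^m))ˣ) (h : lam ^ (p^n) = 1) :
    Multiplicative (ZMod (p^n)) →* MulAut (Multiplicative (ZMod (p^m))) :=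
  ((addAutToMulAut (ZMod (p^m))).comp AddAut.mulLeft).comp (zmodUnitHom p m n lam h)

/-- The semidirect product `G(λ,m,n) = ZMod (p^m) ⋊_λ ZMod (p^n)`. -/
abbrev BeauvilleGroup (p m n : ℕ) (lam : (ZMod (p^m))ˣ) (h : lam ^ (p^n) = 1) :=
  SemidirectProduct (Multiplicative (ZMod (p^m))) (Multiplicative (ZMod (p^n)))
    (beauvilleAut p m n lam h)

-- general power formula in semidirect product
lemma sdp_pow_left {N G : Type*} [CommGroup N] [Group G] (φ : G →* MulAut N)
    (g : SemidirectProduct N G φ) (k : ℕ) :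
    (g ^ k).left = ∏ i ∈ range k, φ (g.right ^ i) g.left := by
  induction k with
  | zero => simp
  | succ k ih =>
      rw [pow_succ, SemidirectProduct.mul_left, ih, prod_range_succ]
      congr 2
      rw [← SemidirectProduct.rightHom_eq_right, map_pow]

lemma sdp_pow_right {N G : Type*} [CommGroup N] [Group G] (φ : G →* MulAut N)
    (g : SemidirectProduct N G φ) (k : ℕ) :
    (g ^ k).right = g.right ^ k := by
  rw [← SemidirectProduct.rightHom_eq_right, map_pow]

-- geometric sum factorization
lemma sum_pow_mul (U : ℤ) (a b : ℕ) :
    ∑ i ∈ range (a * b), U ^ i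
      = (∑ j ∈ range b, (U ^ a) ^ j) * (∑ i ∈ range a, U ^ i) := by
  induction b with
  | zero => simp
  | succ b ih =>
      rw [Nat.mul_succ, Finset.sum_range_add, ih, sum_range_succ, add_mul]
      congr 1
      rw [Finset.mul_sum]
      refine Finset.sum_congr rfl fun i _ => ?_
      rw [← pow_mul, ← pow_add, mul_comm a b]

lemma pow_one_add_mul (p t : ℤ) : ∀ j : ℕ, ∃ c : ℤ, (1 + p * t) ^ j = 1 + j * p * t + p ^ 2 * c := by
  intro j
  induction j with
  | zero => exact ⟨0, by ring⟩
  | succ j ih =>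
      obtain ⟨c, hc⟩ := ih
      exact ⟨c + j * t ^ 2 + c * p * t, by push_cast; rw [pow_succ, hc]; ring⟩

lemma sum_geom_aux (p t : ℤ) : ∀ j : ℕ, ∃ k c : ℤ,
    (∑ i ∈ range j, (1 + p * t) ^ i) = j + p * t * k + p ^ 2 * c ∧ 2 * k = j * (j - 1) := by
  intro j
  induction j with
  | zero => exact ⟨0, 0, by simp, by simp⟩
  | succ j ih =>
      obtain ⟨k, c, hkc, hk⟩ := ih
      obtain ⟨d, hd⟩ := pow_one_add_mul p t j
      refine ⟨k + j, c + d, ?_, ?_⟩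
      · rw [sum_range_succ, hkc, hd]; push_cast; ring
      · push_cast; rw [mul_add, hk]; ring

lemma key_geom (p : ℕ) (hodd : Odd p) (U : ℤ) (hU : ∃ t : ℤ, U = 1 + p * t) (r : ℕ) :
    ∃ k : ℤ, (∑ i ∈ range (p ^ r), U ^ i) = p ^ r * (1 + p * k) := by
  obtain ⟨q, hq⟩ := hodd
  induction r with
  | zero => exact ⟨0, by simp⟩
  | succ r ih =>
      obtain ⟨k, hk⟩ := ih
      -- sum over p^(r+1) = (sum over p of (U^(p^r))^j) * (sum over p^r of U^i)
      have hfact : ∑ i ∈ range (p ^ (r+1)), U ^ i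
          = (∑ j ∈ range p, (U ^ (p ^ r)) ^ j) * (∑ i ∈ range (p ^ r), U ^ i) := by
        rw [pow_succ]
        exact sum_pow_mul U (p ^ r) p
      -- U^(p^r) = 1 + p * s for some s
      obtain ⟨t, ht⟩ := hU
      have hW : ∃ s : ℤ, U ^ (p ^ r) = 1 + p * s := by
        obtain ⟨c, hc⟩ := pow_one_add_mul p t (p ^ r)
        exact ⟨(p^r : ℕ) * t + p * c, by rw [ht, hc]; push_cast; ring⟩
      obtain ⟨s, hs⟩ := hW
      obtain ⟨k2, c2, hkc2, hk2⟩ := sum_geom_aux p s p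
      -- 2 * k2 = p * (p - 1) = p * 2q  so k2 = p*q
      have hp' : (p : ℤ) = 2 * q + 1 := by exact_mod_cast hq
      have hpq : k2 = p * q := by
        have h2 : (2:ℤ) * k2 = 2 * ((p:ℤ) * q) := by rw [hk2, hp']; ring
        linarith
      rw [hfact, hs, hkc2, hk, hpq]
      exact ⟨s * q + c2 + k + p * s * q * k + p * c2 * k, by push_cast; ring⟩

lemma zmod_p_dvd (p m : ℕ) (hp : p.Prime) (hm : 1 ≤ m) (c : ZMod (p ^ m))
    (hc : ZMod.castHom (dvd_pow_self p (by omega : m ≠ 0)) (ZMod p) c = 0) :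
    ∃ t : ZMod (p ^ m), c = p * t := by
  haveI : NeZero (p ^ m) := ⟨pow_ne_zero _ hp.ne_zero⟩
  haveI : NeZero p := ⟨hp.ne_zero⟩
  have h1 : ((c.val : ℕ) : ZMod p) = 0 := by
    rwa [ZMod.castHom_apply, ← ZMod.natCast_val] at hc
  have h2 : p ∣ c.val := (ZMod.natCast_eq_zero_iff _ _).mp h1
  obtain ⟨s, hs⟩ := h2
  refine ⟨(s : ZMod (p ^ m)), ?_⟩
  have : ((c.val : ℕ) : ZMod (p ^ m)) = c := by
    rw [ZMod.natCast_val, ZMod.cast_id]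
  rw [← this, hs]
  push_cast
  ring

lemma unit_one_add (p m : ℕ) (hp : p.Prime) (hodd : Odd p) (hm : 1 ≤ m)
    (e : ℕ) (u : (ZMod (p ^ m))ˣ) (hu : u ^ (p ^ e) = 1) :
    ∃ t : ZMod (p ^ m), (u : ZMod (p ^ m)) = 1 + p * t := by
  haveI : Fact p.Prime := ⟨hp⟩
  set f := ZMod.castHom (dvd_pow_self p (by omega : m ≠ 0)) (ZMod p) with hf
  set v : (ZMod p)ˣ := Units.map (f : ZMod (p^m) →* ZMod p) u with hvdef
  have hv1 : v ^ (p ^ e) = 1 := by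
    rw [← map_pow, hu, map_one]
  have hv2 : v ^ (p - 1) = 1 := by
    have h' := ZMod.pow_card_sub_one_eq_one (a := (v : ZMod p)) (Units.ne_zero v)
    ext
    push_cast
    exact h'
  have hord : orderOf v ∣ Nat.gcd (p ^ e) (p - 1) :=
    Nat.dvd_gcd (orderOf_dvd_of_pow_eq_one hv1) (orderOf_dvd_of_pow_eq_one hv2)
  have hcop : Nat.Coprime (p ^ e) (p - 1) := by
    apply Nat.Coprime.pow_left
    exact (Nat.coprime_self_sub_right hp.one_le).mpr (Nat.coprime_one_right p)
  have hv : v = 1 := by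
    rw [← orderOf_eq_one_iff]
    have h1 := hord
    rw [hcop] at h1
    exact Nat.dvd_one.mp h1
  have hfv : f ((u : ZMod (p ^ m)) - 1) = 0 := by
    rw [map_sub, map_one]
    have : f (u : ZMod (p ^ m)) = (v : ZMod p) := rfl
    rw [this, hv]
    simp
  obtain ⟨t, ht⟩ := zmod_p_dvd p m hp hm _ hfv
  exact ⟨t, by linear_combination ht⟩

lemma isUnit_one_add_p_mul (p m : ℕ) (hp : p.Prime) (hm : 1 ≤ m) (k : ℤ) :
    IsUnit (((1 + p * k : ℤ)) : ZMod (p ^ m)) := by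
  have hcp : IsCoprime (1 + (p:ℤ) * k) ((p : ℤ) ^ m) := by
    apply IsCoprime.pow_right
    exact ⟨1, -k, by ring⟩
  obtain ⟨A, B, hAB⟩ := hcp
  apply IsUnit.of_mul_eq_one ((A : ℤ) : ZMod (p ^ m))
  have h0 : (((p : ℤ) ^ m : ℤ) : ZMod (p ^ m)) = 0 := by
    push_cast
    rw [← Nat.cast_pow, ZMod.natCast_self]
  calc ((1 + (p:ℤ) * k : ℤ) : ZMod (p^m)) * ((A : ℤ) : ZMod (p^m))
      = ((A * (1 + (p:ℤ) * k) + B * (p:ℤ)^m : ℤ) : ZMod (p^m)) := by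
        push_cast [h0]; ring
    _ = 1 := by rw [hAB]; simp

section aux

lemma zmod_sum_geom (p m : ℕ) (hp : p.Prime) (hodd : Odd p) (hm : 1 ≤ m)
    (e : ℕ) (u : (ZMod (p ^ m))ˣ) (hu : u ^ (p ^ e) = 1) (r : ℕ) :
    ∃ w : (ZMod (p ^ m))ˣ,
      (∑ i ∈ range (p ^ r), ((u : ZMod (p ^ m)) ^ i))
        = (p : ZMod (p ^ m)) ^ r * (w : ZMod (p ^ m)) := by
  haveI : NeZero (p ^ m) := ⟨pow_ne_zero _ hp.ne_zero⟩
  obtain ⟨t, ht⟩ := unit_one_add p m hp hodd hm e u hu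
  obtain ⟨k, hk⟩ := key_geom p hodd (1 + (p : ℤ) * (t.val : ℤ)) ⟨(t.val : ℤ), rfl⟩ r
  have hcast := congrArg (Int.cast : ℤ → ZMod (p ^ m)) hk
  push_cast at hcast
  rw [ZMod.natCast_val, ZMod.cast_id, ← ht] at hcast
  obtain ⟨w, hw⟩ := isUnit_one_add_p_mul p m hp hm k
  refine ⟨w, ?_⟩
  rw [hcast, hw]
  push_cast
  ring

end aux

section grp

variable (p m n : ℕ) (lam : (ZMod (p ^ m))ˣ) (h : lam ^ (p ^ n) = 1)

lemma mult_zmod_pow_eq_one (x : Multiplicative (ZMod (p ^ n))) : x ^ (p ^ n) = 1 := by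
  have h0 : Multiplicative.toAdd (x ^ (p ^ n)) = Multiplicative.toAdd (1 : Multiplicative (ZMod (p ^ n))) := by
    rw [toAdd_pow, nsmul_eq_mul, ZMod.natCast_self, zero_mul]
    rfl
  exact Multiplicative.toAdd.injective h0

lemma zmodUnitHom_pow_eq_one (x : Multiplicative (ZMod (p ^ n))) :
    (zmodUnitHom p m n lam h x) ^ (p ^ n) = 1 := by
  rw [← map_pow, mult_zmod_pow_eq_one, map_one]

lemma beauvilleAut_apply (x : Multiplicative (ZMod (p ^ n))) (a : Multiplicative (ZMod (p ^ m))) :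
    beauvilleAut p m n lam h x a
      = Multiplicative.ofAdd (((zmodUnitHom p m n lam h x : (ZMod (p ^ m))ˣ) : ZMod (p ^ m))
          * Multiplicative.toAdd a) := rfl

lemma bg_pow_left (g : BeauvilleGroup p m n lam h) (k : ℕ) :
    Multiplicative.toAdd ((g ^ k).left)
      = (∑ i ∈ range k,
          ((zmodUnitHom p m n lam h g.right : (ZMod (p ^ m))ˣ) : ZMod (p ^ m)) ^ i)
        * Multiplicative.toAdd g.left := by
  rw [sdp_pow_left, Finset.sum_mul]
  rw [show Multiplicative.toAdd (∏ i ∈ range k, (beauvilleAut p m n lam h) (g.right ^ i) g.left)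
      = ∑ i ∈ range k, Multiplicative.toAdd ((beauvilleAut p m n lam h) (g.right ^ i) g.left)
    from toAdd_prod _ _]
  refine Finset.sum_congr rfl fun i _ => ?_
  rw [beauvilleAut_apply, toAdd_ofAdd, map_pow, Units.val_pow_eq_pow_val]

lemma bg_pow_right (g : BeauvilleGroup p m n lam h) (k : ℕ) :
    Multiplicative.toAdd ((g ^ k).right) = (k : ZMod (p ^ n)) * Multiplicative.toAdd g.right := by
  rw [sdp_pow_right, toAdd_pow, nsmul_eq_mul]

end grp

theorem pPow_powers_eq_divisible_set
    (p m n : ℕ) (hp : p.Prime) (hodd : Odd p) (hm : 1 ≤ m) (hn : 1 ≤ n)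
    (lam : (ZMod (p ^ m))ˣ) (h : lam ^ (p ^ n) = 1) (r : ℕ) :
    {g : BeauvilleGroup p m n lam h | ∃ g₀ : BeauvilleGroup p m n lam h, g₀ ^ (p ^ r) = g} =
      {g : BeauvilleGroup p m n lam h |
        (∃ b : ZMod (p ^ m), Multiplicative.toAdd g.left = (p : ZMod (p ^ m)) ^ r * b) ∧
        (∃ c : ZMod (p ^ n), Multiplicative.toAdd g.right = (p : ZMod (p ^ n)) ^ r * c)} := by
  ext g
  simp only [Set.mem_setOf_eq]
  constructor
  · rintro ⟨g₀, rfl⟩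
    obtain ⟨w, hw⟩ := zmod_sum_geom p m hp hodd hm n (zmodUnitHom p m n lam h g₀.right)
      (zmodUnitHom_pow_eq_one p m n lam h g₀.right) r
    constructor
    · refine ⟨(w : ZMod (p ^ m)) * Multiplicative.toAdd g₀.left, ?_⟩
      rw [bg_pow_left, hw]
      ring
    · refine ⟨Multiplicative.toAdd g₀.right, ?_⟩
      rw [bg_pow_right]
      push_cast
      ring
  · rintro ⟨⟨b, hb⟩, ⟨c, hc⟩⟩
    set x : Multiplicative (ZMod (p ^ n)) := Multiplicative.ofAdd c with hx
    obtain ⟨w, hw⟩ := zmod_sum_geom p m hp hodd hm n (zmodUnitHom p m n lam h x)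
      (zmodUnitHom_pow_eq_one p m n lam h x) r
    refine ⟨⟨Multiplicative.ofAdd (((w⁻¹ : (ZMod (p ^ m))ˣ) : ZMod (p ^ m)) * b), x⟩, ?_⟩
    set g₀ : BeauvilleGroup p m n lam h :=
      ⟨Multiplicative.ofAdd (((w⁻¹ : (ZMod (p ^ m))ˣ) : ZMod (p ^ m)) * b), x⟩ with hg₀
    have hleft : Multiplicative.toAdd ((g₀ ^ (p ^ r)).left) = Multiplicative.toAdd g.left := by
      rw [bg_pow_left]
      have hr : g₀.right = x := rfl
      have hl : Multiplicative.toAdd g₀.left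
          = ((w⁻¹ : (ZMod (p ^ m))ˣ) : ZMod (p ^ m)) * b := rfl
      rw [hr, hl, hw, hb]
      have : ((w : ZMod (p ^ m))) * ((w⁻¹ : (ZMod (p ^ m))ˣ) : ZMod (p ^ m)) = 1 := by
        rw [← Units.val_mul, mul_inv_cancel, Units.val_one]
      calc (p : ZMod (p ^ m)) ^ r * (w : ZMod (p ^ m))
            * (((w⁻¹ : (ZMod (p ^ m))ˣ) : ZMod (p ^ m)) * b)
          = (p : ZMod (p ^ m)) ^ r * (((w : ZMod (p ^ m)))
              * ((w⁻¹ : (ZMod (p ^ m))ˣ) : ZMod (p ^ m))) * b := by ring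
        _ = (p : ZMod (p ^ m)) ^ r * b := by rw [this]; ring
    have hright : Multiplicative.toAdd ((g₀ ^ (p ^ r)).right) = Multiplicative.toAdd g.right := by
      rw [bg_pow_right]
      have hr : g₀.right = x := rfl
      rw [hr, hx, toAdd_ofAdd, hc]
      push_cast
      ring
    exact SemidirectProduct.ext (Multiplicative.toAdd.injective hleft)
      (Multiplicative.toAdd.injective hright)
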